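/- Let A be a square matrix over a field F, and let A⁻ and A⁼ be any two von Neumann inverses of A. Then i(A²A⁻ + I − AA⁻) = i(A²A⁼ + I − AA⁼); that is, the Drazin index of A²A⁻ + I − AA⁻ does not depend on the choice of von Neumann inverse A⁻. -/
import Mathlib


open Matrix Polynomial

/-- The Drazin index of a square matrix: the smallest natural number `k`
such that `rank (A ^ k) = rank (A ^ (k+1))`. -/
noncomputable def drazinIndex {n : Type*} [Fintype n] [DecidableEq n]
    {F : Type*} [Field F] (A : Matrix n n F) : ℕ :=
  sInf {k : ℕ | (A ^ k).rank = (A ^ (k + 1)).rank}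

/-- `X` is the Drazin inverse of `A`:
`A^(k+1) * X = A^k`, `X * A * X = X`, `A * X = X * A` with `k = drazinIndex A`. -/
def IsDrazinInverse {n : Type*} [Fintype n] [DecidableEq n]
    {F : Type*} [Field F] (A X : Matrix n n F) : Prop :=
  A ^ (drazinIndex A + 1) * X = A ^ drazinIndex A ∧ X * A * X = X ∧ A * X = X * A

section Aux

variable {F : Type*} [Field F] {n : ℕ}

set_option synthInstance.maxHeartbeats 1000000 in
set_option maxHeartbeats 1000000 in
lemma rank_pow_formula (A Am : Matrix (Fin n) (Fin n) F) (hAm : A * Am * A = A) (k : ℕ) :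
    ((A * A * Am + 1 - A * Am) ^ k).rank + A.rank = (A ^ (k + 1)).rank + n := by
  set P := A * Am with hP
  have hPA : P * A = A := hAm
  have hPP : P * P = P := by rw [hP, ← mul_assoc, hAm]
  have hB : A * A * Am + 1 - A * Am = A * P + 1 - P := by rw [hP, mul_assoc]
  -- rank-nullity for a matrix
  have rn : ∀ M : Matrix (Fin n) (Fin n) F,
      M.rank + Module.finrank F (LinearMap.ker M.mulVecLin) = n := by
    intro M
    have h := LinearMap.finrank_range_add_finrank_ker M.mulVecLin
    simpa [Matrix.rank] using h
  -- powers of B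
  have hPAk : ∀ m : ℕ, P * A ^ (m + 1) = A ^ (m + 1) := by
    intro m
    rw [pow_succ', ← mul_assoc, hPA]
  have hBpow : ∀ m : ℕ, (A * P + 1 - P) ^ (m + 1) = A ^ (m + 1) * P + 1 - P := by
    intro m
    induction m with
    | zero => simp
    | succ m ih =>
      have h1 : A ^ (m + 1) * P * (A * P) = A ^ (m + 2) * P := by
        rw [mul_assoc, ← mul_assoc P A P, hPA, ← mul_assoc, ← pow_succ]
      have h2 : A ^ (m + 1) * P * P = A ^ (m + 1) * P := by rw [mul_assoc, hPP]
      have h3 : P * (A * P) = A * P := by rw [← mul_assoc, hPA]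
      calc (A * P + 1 - P) ^ (m + 2) = (A ^ (m + 1) * P + 1 - P) * (A * P + 1 - P) := by
            rw [pow_succ, ih]
        _ = A ^ (m + 2) * P + 1 - P := by
            simp only [sub_mul, add_mul, mul_sub, mul_add, one_mul, mul_one, h1, h2, h3, hPP]
            abel
  cases k with
  | zero => rw [pow_zero, zero_add, pow_one, Matrix.rank_one, Fintype.card_fin]; omega
  | succ k =>
    show _ = (A ^ (k + 2)).rank + n
    rw [hB, hBpow k]
    set f := A.mulVecLin with hf
    set K := LinearMap.ker ((A ^ (k + 2)).mulVecLin) with hK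
    -- the kernel of B^(k+1) is the image of the kernel of A^(k+2) under A
    have hker : LinearMap.ker ((A ^ (k + 1) * P + 1 - P).mulVecLin) = K.map f := by
      ext x
      simp only [Submodule.mem_map, LinearMap.mem_ker, hK, hf, Matrix.mulVecLin_apply]
      constructor
      · intro hx
        have h0 : (P * (A ^ (k + 1) * P + 1 - P)) *ᵥ x = 0 := by
          rw [← Matrix.mulVec_mulVec, hx, Matrix.mulVec_zero]
        have hsimp : P * (A ^ (k + 1) * P + 1 - P) = A ^ (k + 1) * P := by
          rw [mul_sub, mul_add, mul_one, ← mul_assoc, hPAk k, hPP]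
          abel
        rw [hsimp] at h0
        have hx2 : x = P *ᵥ x := by
          have hexp : (A ^ (k + 1) * P) *ᵥ x + x - P *ᵥ x = 0 := by
            have : (A ^ (k + 1) * P + 1 - P) *ᵥ x
                = (A ^ (k + 1) * P) *ᵥ x + x - P *ᵥ x := by
              rw [Matrix.sub_mulVec, Matrix.add_mulVec, Matrix.one_mulVec]
            rw [← this, hx]
          rw [h0] at hexp
          have := sub_eq_zero.mp (by simpa using hexp)
          simpa using this
        refine ⟨Am *ᵥ x, ?_, ?_⟩
        · rw [Matrix.mulVec_mulVec, show A ^ (k + 2) * Am = A ^ (k + 1) * P by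
            rw [hP, ← mul_assoc, ← pow_succ], h0]
        · rw [Matrix.mulVec_mulVec, ← hP, ← hx2]
      · rintro ⟨y, hy, rfl⟩
        rw [Matrix.mulVec_mulVec]
        have : (A ^ (k + 1) * P + 1 - P) * A = A ^ (k + 2) := by
          rw [sub_mul, add_mul, one_mul, mul_assoc, hPA, ← pow_succ]
          abel
        rw [this, hy]
    have hle : LinearMap.ker f ≤ K := by
      intro x hx
      simp only [LinearMap.mem_ker, hf] at hx
      simp only [hK, LinearMap.mem_ker, show A ^ (k + 2) = A ^ (k + 1) * A from pow_succ A (k + 1),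
        Matrix.mulVecLin_mul, LinearMap.comp_apply, hx, map_zero]
    have r4 : Module.finrank F (K.map f) + Module.finrank F (LinearMap.ker f)
        = Module.finrank F K := by
      have h := LinearMap.finrank_range_add_finrank_ker (f.domRestrict K)
      rw [LinearMap.range_domRestrict, LinearMap.ker_domRestrict] at h
      have hco : Module.finrank F ↥(Submodule.comap K.subtype (LinearMap.ker f))
          = Module.finrank F ↥(LinearMap.ker f) :=
        LinearEquiv.finrank_eq (Submodule.comapSubtypeEquivOfLe hle)
      rw [hco] at h
      exact h
    have r1 := rn (A ^ (k + 1) * P + 1 - P)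
    have r2 := rn A
    have r3 := rn (A ^ (k + 2))
    rw [hker] at r1
    rw [← hf] at r2
    rw [← hK] at r3
    omega

end Aux

/-- the Drazin index of `A²A⁻ + I − AA⁻` does not depend on the choice
of von Neumann inverse `A⁻`. -/
theorem index_invariant_vonNeumann {F : Type*} [Field F] {n : ℕ}
    (A Am Ae : Matrix (Fin n) (Fin n) F)
    (hAm : A * Am * A = A) (hAe : A * Ae * A = A) :
    drazinIndex (A * A * Am + 1 - A * Am) = drazinIndex (A * A * Ae + 1 - A * Ae) := by
  have key : ∀ X : Matrix (Fin n) (Fin n) F, A * X * A = A →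
      {k : ℕ | ((A * A * X + 1 - A * X) ^ k).rank = ((A * A * X + 1 - A * X) ^ (k + 1)).rank}
      = {k : ℕ | (A ^ (k + 1)).rank = (A ^ (k + 2)).rank} := by
    intro X hX
    ext k
    have h1 := rank_pow_formula A X hX k
    have h2 : ((A * A * X + 1 - A * X) ^ (k + 1)).rank + A.rank = (A ^ (k + 2)).rank + n :=
      rank_pow_formula A X hX (k + 1)
    simp only [Set.mem_setOf_eq]
    constructor <;> intro h <;> omega
  unfold drazinIndex
  rw [key Am hAm, key Ae hAe]
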